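/- Let R be a commutative ring with identity, S a multiplicative subset of R, n a positive integer, and I an ideal of R with I ∩ S = ∅. If I is an S-n-absorbing ideal of R, then the set of minimal prime ideals of I that are disjoint from S is finite and has at most n elements. -/

import Mathlib

/-- `I` is `S`-`n`-absorbing with associated element `s`. -/
def IsSNAbsorbingAssoc {R : Type*} [CommRing R] (s : R) (n : ℕ) (I : Ideal R) : Prop :=
  ∀ r : Fin (n + 1) → R, (∏ i, r i) ∈ I →
    ∃ j : Fin (n + 1), s * ∏ i ∈ Finset.univ.erase j, r i ∈ I

/-- `I` is an `S`-`n`-absorbing ideal. -/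
def IsSNAbsorbing {R : Type*} [CommRing R] (S : Set R) (n : ℕ) (I : Ideal R) : Prop :=
  ∃ s ∈ S, IsSNAbsorbingAssoc s n I

lemma absorb_multiset {R : Type*} [CommRing R] [DecidableEq R] {s : R} {n : ℕ} {I : Ideal R}
    (h : IsSNAbsorbingAssoc s n I) (m : Multiset R) (hc : Multiset.card m = n + 1)
    (hp : m.prod ∈ I) : ∃ a ∈ m, s * (m.erase a).prod ∈ I := by
  obtain ⟨l, rfl⟩ := m.exists_rep
  simp only [Multiset.quot_mk_to_coe] at hc hp ⊢
  have hl : l.length = n + 1 := hc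
  obtain ⟨r, hr⟩ : ∃ r : Fin (n + 1) → R, List.ofFn r = l := by
    refine ⟨fun i => l.get (Fin.cast hl.symm i), ?_⟩
    apply List.ext_getElem
    · simp [hl]
    · intro i h1 h2
      rw [List.getElem_ofFn]
      rfl
  have hm : (l : Multiset R) = Multiset.map r Finset.univ.val := by
    rw [Fin.univ_val_map, ← hr]
  have hprod : (∏ i, r i) ∈ I := by
    rwa [← List.prod_ofFn, hr, ← Multiset.prod_coe]
  obtain ⟨j, hj⟩ := h r hprod
  refine ⟨r j, ?_, ?_⟩
  · rw [hm]
    exact Multiset.mem_map_of_mem r (Finset.mem_val.mpr (Finset.mem_univ j))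
  · have key : (l : Multiset R) = r j ::ₘ Multiset.map r (Finset.univ.erase j).val := by
      rw [hm, ← Multiset.map_cons, Finset.erase_val,
        Multiset.cons_erase (Finset.mem_val.mpr (Finset.mem_univ j))]
    rw [key, Multiset.erase_cons_head]
    rwa [Finset.prod_eq_multiset_prod] at hj

lemma le_cons_of_not_mem {α : Type*} [DecidableEq α] {a : α} {m' m₀ : Multiset α}
    (h : m' ≤ a ::ₘ m₀) (ha : a ∉ m') : m' ≤ m₀ := by
  rw [Multiset.le_iff_count] at h ⊢
  intro b
  have := h b
  rcases eq_or_ne b a with rfl | hba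
  · simp [Multiset.count_eq_zero_of_notMem ha]
  · simpa [Multiset.count_cons_of_ne hba] using this

lemma absorb_many {R : Type*} [CommRing R] [DecidableEq R] {s : R} {n : ℕ} {I : Ideal R}
    (h : IsSNAbsorbingAssoc s n I) :
    ∀ (t : ℕ) (m : Multiset R), Multiset.card m = n + 1 + t → m.prod ∈ I →
      ∃ m' ≤ m, Multiset.card m' = n ∧ s ^ (t + 1) * m'.prod ∈ I := by
  intro t
  induction t with
  | zero =>
    intro m hc hp
    obtain ⟨a, ham, ha⟩ := absorb_multiset h m hc hp
    refine ⟨m.erase a, Multiset.erase_le a m, ?_, by simpa using ha⟩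
    rw [Multiset.card_erase_of_mem ham, hc]
    rfl
  | succ t ih =>
    intro m hc hp
    -- pick two elements a, b of m
    have hm0 : m ≠ 0 := by
      intro h0; rw [h0] at hc; simp at hc
    obtain ⟨a, ham⟩ := Multiset.exists_mem_of_ne_zero hm0
    obtain ⟨m₁, rfl⟩ := Multiset.exists_cons_of_mem ham
    have hm1 : m₁ ≠ 0 := by
      intro h0; rw [h0] at hc; simp at hc; omega
    obtain ⟨b, hbm⟩ := Multiset.exists_mem_of_ne_zero hm1
    obtain ⟨m₀, rfl⟩ := Multiset.exists_cons_of_mem hbm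
    -- apply IH to (a*b) ::ₘ m₀
    have hc' : Multiset.card ((a * b) ::ₘ m₀) = n + 1 + t := by
      simp at hc ⊢; omega
    have hp' : ((a * b) ::ₘ m₀).prod ∈ I := by
      simpa [mul_assoc] using hp
    obtain ⟨m', hle, hcard, hmem⟩ := ih ((a * b) ::ₘ m₀) hc' hp'
    by_cases hab : a * b ∈ m'
    · -- use the absorbing property once more
      obtain ⟨m'', rfl⟩ := Multiset.exists_cons_of_mem hab
      have hm''le : m'' ≤ m₀ := by
        have := Multiset.erase_le_erase (a * b) hle
        simpa [Multiset.erase_cons_head] using this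
      have hcard'' : Multiset.card m'' = n - 1 := by simp at hcard; omega
      have hn1 : 1 ≤ n := by
        rcases Nat.eq_zero_or_pos n with h0 | h1
        · exfalso
          -- if n = 0 then m' has card 0 but contains a*b
          rw [h0] at hcard
          simp at hcard
        · exact h1
      set m₂ : Multiset R := (s ^ (t + 1) * a) ::ₘ b ::ₘ m'' with hm₂
      have hc₂ : Multiset.card m₂ = n + 1 := by simp [hm₂, hcard'']; omega
      have hp₂ : m₂.prod ∈ I := by
        have : m₂.prod = s ^ (t + 1) * ((a * b) ::ₘ m'').prod := by
          simp [hm₂]; ring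
        rw [this]; exact hmem
      obtain ⟨c, hcm, hc'⟩ := absorb_multiset h m₂ hc₂ hp₂
      rcases Multiset.mem_cons.1 hcm with rfl | hc2
      · -- c is the head
        rw [Multiset.erase_cons_head] at hc'
        refine ⟨b ::ₘ m'', ?_, by simp [hcard'']; omega, ?_⟩
        · exact le_trans (Multiset.cons_le_cons b hm''le)
            (Multiset.cons_le_cons b (le_refl m₀) |>.trans (Multiset.le_cons_self _ _))
        · have heq : s ^ (t + 1 + 1) * (b ::ₘ m'').prod
              = s ^ (t + 1) * (s * (b ::ₘ m'').prod) := by ring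
          rw [heq]
          exact I.mul_mem_left _ hc'
      · by_cases hceq : c = s ^ (t + 1) * a
        · rw [hceq, Multiset.erase_cons_head] at hc'
          refine ⟨b ::ₘ m'', ?_, by simp [hcard'']; omega, ?_⟩
          · exact le_trans (Multiset.cons_le_cons b hm''le)
              (Multiset.cons_le_cons b (le_refl m₀) |>.trans (Multiset.le_cons_self _ _))
          · have heq : s ^ (t + 1 + 1) * (b ::ₘ m'').prod
                = s ^ (t + 1) * (s * (b ::ₘ m'').prod) := by ring
            rw [heq]
            exact I.mul_mem_left _ hc'
        · rw [Multiset.erase_cons_tail_of_mem hc2] at hc'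
          refine ⟨a ::ₘ (b ::ₘ m'').erase c, ?_, ?_, ?_⟩
          · refine Multiset.cons_le_cons a ?_
            exact le_trans (Multiset.erase_le c _) (Multiset.cons_le_cons b hm''le)
          · rw [Multiset.card_cons, Multiset.card_erase_of_mem hc2]
            simp [hcard'']
            omega
          · have heq : s ^ (t + 1 + 1) * (a ::ₘ (b ::ₘ m'').erase c).prod
                = s * ((s ^ (t + 1) * a) ::ₘ (b ::ₘ m'').erase c).prod := by
              simp only [Multiset.prod_cons]
              ring
            rw [heq]
            exact hc'
    · refine ⟨m', (le_cons_of_not_mem hle hab).trans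
        ((Multiset.le_cons_self m₀ b).trans (Multiset.le_cons_self _ a)), hcard, ?_⟩
      have heq : s ^ (t + 1 + 1) * m'.prod = s * (s ^ (t + 1) * m'.prod) := by ring
      rw [heq]
      exact I.mul_mem_left s hmem

lemma no_big_family {R : Type*} [CommRing R] {S : Submonoid R} {n : ℕ}
    {I : Ideal R} (hI : IsSNAbsorbing (S : Set R) n I)
    (f : Fin (n + 1) → Ideal R) (hinj : Function.Injective f)
    (hmem : ∀ i, f i ∈ I.minimalPrimes ∧ Disjoint (f i : Set R) (S : Set R)) : False := by
  classical
  obtain ⟨s, hsS, habs⟩ := hI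
  have hmin : ∀ i, Minimal (fun q : Ideal R => q.IsPrime ∧ I ≤ q) (f i) := fun i => (hmem i).1
  have hprime : ∀ i, (f i).IsPrime := fun i => (hmin i).prop.1
  have hIle : ∀ i, I ≤ f i := fun i => (hmin i).prop.2
  have hinc : ∀ i j, f i ≤ f j → i = j := by
    intro i j hij
    by_contra hne
    have h2 := (hmin j).le_of_le ⟨hprime i, hIle i⟩ hij
    exact hne (hinj (le_antisymm hij h2))
  -- choose x i ∈ f i, not in any f j for j ≠ i
  have hx : ∀ i : Fin (n + 1), ∃ x ∈ f i, ∀ j, j ≠ i → x ∉ f j := by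
    intro i
    have hns : ¬ ((f i : Set R) ⊆ ⋃ j ∈ ((Finset.univ.erase i : Finset (Fin (n + 1))) : Set (Fin (n + 1))), (f j : Set R)) := by
      rw [Ideal.subset_union_prime i i (fun k _ _ _ => hprime k)]
      rintro ⟨j, hj, hle⟩
      exact (Finset.mem_erase.1 hj).1 (hinc _ _ hle).symm
    obtain ⟨x, hx1, hx2⟩ := Set.not_subset.1 hns
    refine ⟨x, hx1, fun j hji hxj => hx2 ?_⟩
    exact Set.mem_biUnion (by simp [Finset.mem_erase, hji]) hxj
  choose x hx1 hx2 using hx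
  set X : R := ∏ i, x i with hX
  have hXmem : ∀ j, X ∈ f j := by
    intro j
    rw [hX, ← Finset.mul_prod_erase _ _ (Finset.mem_univ j)]
    exact Ideal.mul_mem_right _ _ (hx1 j)
  -- find u avoiding all f j with u * X ^ k ∈ I
  have hukey : ∃ u, (∀ j, u ∉ f j) ∧ ∃ k, u * X ^ k ∈ I := by
    by_contra hno
    push_neg at hno
    set M : Submonoid R :=
      { carrier := {r | ∃ u, (∀ j, u ∉ f j) ∧ ∃ k, u * X ^ k = r}
        one_mem' := ⟨1, fun j h1 => (hprime j).ne_top ((Ideal.eq_top_iff_one _).2 h1),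
          0, by simp⟩
        mul_mem' := by
          rintro a b ⟨u1, hu1, k1, rfl⟩ ⟨u2, hu2, k2, rfl⟩
          exact ⟨u1 * u2,
            fun j hm => ((hprime j).mem_or_mem hm).elim (hu1 j) (hu2 j),
            k1 + k2, by ring⟩ } with hM
    have hdisj : Disjoint (I : Set R) (M : Set R) := by
      rw [Set.disjoint_left]
      rintro r hrI ⟨u, hu, k, rfl⟩
      exact hno u hu k hrI
    obtain ⟨Q, hQprime, hIQ, hQdisj⟩ := Ideal.exists_le_prime_disjoint I M hdisj
    have hQsub : (Q : Set R) ⊆ ⋃ j ∈ ((Finset.univ : Finset (Fin (n + 1))) : Set (Fin (n + 1))), (f j : Set R) := by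
      intro q hq
      by_contra hq2
      have hqM : q ∈ M := by
        refine ⟨q, fun j hj => hq2 (Set.mem_biUnion (by simp) hj), 0, by simp⟩
      exact Set.disjoint_left.1 hQdisj hq hqM
    rw [Ideal.subset_union_prime 0 0 (fun k _ _ _ => hprime k)] at hQsub
    obtain ⟨j, -, hQle⟩ := hQsub
    have hfQ : f j ≤ Q := (hmin j).le_of_le ⟨hQprime, hIQ⟩ hQle
    have hXQ : X ∈ Q := hfQ (hXmem j)
    have hXM : X ∈ M := ⟨1, fun j h1 => (hprime j).ne_top ((Ideal.eq_top_iff_one _).2 h1),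
      1, by ring⟩
    exact Set.disjoint_left.1 hQdisj hXQ hXM
  obtain ⟨u, hu, k, huk⟩ := hukey
  -- bump exponent to k + 1
  have huk' : u * X ^ (k + 1) ∈ I := by
    have : u * X ^ (k + 1) = X * (u * X ^ k) := by ring
    rw [this]
    exact I.mul_mem_left X huk
  -- build the big multiset
  set M0 : Multiset R :=
    u ::ₘ (Finset.univ.val.bind fun i : Fin (n + 1) => Multiset.replicate (k + 1) (x i)) with hM0
  have hcard0 : Multiset.card M0 = 1 + (n + 1) * (k + 1) := by
    simp [hM0, Multiset.card_bind, Function.comp_def, Multiset.map_const']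
    ring
  have hprod0 : M0.prod ∈ I := by
    have h2 : X ^ (k + 1) = ∏ i, x i ^ (k + 1) := by rw [hX, ← Finset.prod_pow]
    have h3 : M0.prod = u * X ^ (k + 1) := by
      rw [hM0, Multiset.prod_cons, Multiset.prod_bind, h2, Finset.prod_eq_multiset_prod]
      simp only [Multiset.prod_replicate]
    rw [h3]
    exact huk'
  obtain ⟨t, ht⟩ : ∃ t, Multiset.card M0 = n + 1 + t := by
    refine ⟨Multiset.card M0 - (n + 1), ?_⟩
    rw [hcard0]
    have : n + 1 ≤ 1 + (n + 1) * (k + 1) := by nlinarith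
    omega
  obtain ⟨m', hle, hcard', hmem'⟩ := absorb_many habs t M0 ht hprod0
  -- all the x i are distinct and different from u
  have hxinj : Function.Injective x := by
    intro i j hij
    by_contra hne
    exact hx2 j i hne (hij ▸ hx1 i)
  -- some x i0 is not in m'
  have hi0 : ∃ i0, x i0 ∉ m' := by
    by_contra hall
    push_neg at hall
    have hsub : Multiset.map x Finset.univ.val ≤ m' := by
      rw [Multiset.le_iff_subset (Finset.univ.nodup.map hxinj)]
      intro a ha
      obtain ⟨i, -, rfl⟩ := Multiset.mem_map.1 ha
      exact hall i
    have := Multiset.card_le_card hsub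
    simp [hcard'] at this
  obtain ⟨i0, hi0⟩ := hi0
  -- every element of m' avoids f i0
  have havoid : ∀ y ∈ m', y ∉ f i0 := by
    intro y hy
    have hyM0 : y ∈ M0 := Multiset.mem_of_le hle hy
    rw [hM0, Multiset.mem_cons] at hyM0
    rcases hyM0 with rfl | hyb
    · exact hu i0
    · obtain ⟨i, -, hyi⟩ := Multiset.mem_bind.1 hyb
      obtain rfl := (Multiset.eq_of_mem_replicate hyi)
      have hii0 : i ≠ i0 := by
        rintro rfl
        exact hi0 hy
      exact hx2 i i0 (Ne.symm hii0)
  -- conclude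
  have hin : s ^ (t + 1) * m'.prod ∈ f i0 := hIle i0 hmem'
  rcases (hprime i0).mem_or_mem hin with hs | hpr
  · have hs' : s ∈ f i0 := (hprime i0).mem_of_pow_mem _ hs
    exact Set.disjoint_left.1 (hmem i0).2 hs' hsS
  · obtain ⟨a, ham', haf⟩ :=
      ((hprime i0).multiset_prod_mem_iff_exists_mem m').1 hpr
    exact havoid a ham' haf

lemma exists_family {α : Type*} {A : Set α} {n : ℕ} (t : Set α) (hts : t ⊆ A)
    (hfin : t.Finite) (hcard : t.ncard = n + 1) :
    ∃ f : Fin (n + 1) → α, Function.Injective f ∧ ∀ i, f i ∈ A := by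
  have hc : hfin.toFinset.card = n + 1 := by
    rw [← Set.ncard_eq_toFinset_card t hfin]
    exact hcard
  set e := Finset.equivFinOfCardEq hc
  refine ⟨fun i => (e.symm i : α), ?_, fun i => hts (hfin.mem_toFinset.1 (e.symm i).2)⟩
  exact Subtype.val_injective.comp e.symm.injective

theorem stmt_9 {R : Type*} [CommRing R] (S : Submonoid R) (n : ℕ) (hn : 0 < n)
    (I : Ideal R) (hIS : Disjoint (I : Set R) (S : Set R))
    (hI : IsSNAbsorbing (S : Set R) n I) :
    {P ∈ I.minimalPrimes | Disjoint (P : Set R) (S : Set R)}.Finite ∧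
      {P ∈ I.minimalPrimes | Disjoint (P : Set R) (S : Set R)}.ncard ≤ n := by
  set A := {P ∈ I.minimalPrimes | Disjoint (P : Set R) (S : Set R)} with hA
  have hno : ∀ t : Set (Ideal R), t ⊆ A → t.Finite → t.ncard = n + 1 → False := by
    intro t h1 h2 h3
    obtain ⟨f, hfi, hfm⟩ := exists_family t h1 h2 h3
    exact no_big_family hI f hfi fun i => ⟨(hfm i).1, (hfm i).2⟩
  have hfin : A.Finite := by
    by_contra hinf
    obtain ⟨t, hts, htf, htc⟩ := Set.Infinite.exists_subset_ncard_eq hinf (n + 1)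
    exact hno t hts htf htc
  refine ⟨hfin, ?_⟩
  by_contra hlt
  push_neg at hlt
  obtain ⟨t, hts, htc⟩ := Set.exists_subset_card_eq (show n + 1 ≤ A.ncard from hlt)
  exact hno t hts (hfin.subset hts) htc
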